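/- (Multiplication of upper bounds.) Let R be a commutative ring, let N, M ≥ 1 and d ≥ 1 be integers, and let χ_1,…,χ_d : ℤ → R be arbitrary functions. For a subset E = {i_1 < ⋯ < i_{d'}} ⊆ {1,…,d} (possibly empty), set i_0 = 0 and i_{d'+1} = d+1, and define a block datum for E to be, for each t ∈ {0,…,d'}, an ordered partition of the gap {i_t+1, i_t+2, …, i_{t+1}−1} into j_t ≥ 0 nonempty blocks P_t^1,…,P_t^{j_t} of consecutive integers, listed in increasing order (j_t = 0 if the gap is empty). Then: ∑_{0<n_1<⋯<n_d<NM} χ_1(n_1)⋯χ_d(n_d) equals the sum, over all subsets E with block data, over all integer chains 0 = m_0 < m_1 < ⋯ < m_{d'} < m_{d'+1} = N, and over all choices, for each t ∈ {0,…,d'}, of integers m_t ≤ q_{t,1} < q_{t,2} < ⋯ < q_{t,j_t} ≤ m_{t+1} − 1, of the product (∏_{t=1}^{d'} χ_{i_t}(m_t·M)) · ∏_{t=0}^{d'} ∏_{x=1}^{j_t} (∑_{q_{t,x}M < n_{u} < (q_{t,x}+1)M, indices u running through P_t^x with n_u strictly increasing in u} ∏_{u ∈ P_t^x} χ_u(n_u)).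 -/

import Mathlib

open Finset

/-- Chain sum over a subset `S` of the index set: the sum, over all families `n` of integers
indexed by `S` with `a < n_u < b` for `u ∈ S` and `n` strictly increasing on `S`, of
`∏_{u ∈ S} χ_u(n_u)`.  (Indices outside `S` are frozen at `0` and not used.) -/
noncomputable def chainSumOn {R : Type*} [CommRing R] {d : ℕ} (χ : Fin d → ℤ → R)
    (S : Finset (Fin d)) (a b : ℤ) : R :=
  ∑ n ∈ (Fintype.piFinset fun i : Fin d => if i ∈ S then Finset.Ioo a b else {0}).filter
      (fun n => ∀ i ∈ S, ∀ j ∈ S, i < j → n i < n j),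
    ∏ i ∈ S, χ i (n i)


private noncomputable def Adom (d : ℕ) (N M : ℤ) : Finset (Fin d → ℤ) :=
  (Fintype.piFinset fun _ : Fin d => Finset.Ioo (0:ℤ) (N*M)).filter
    (fun n => ∀ i j : Fin d, i < j → n i < n j)

private def Fmap (d : ℕ) (M : ℤ) (n : Fin d → ℤ) : Finset (Fin d) × (Fin d → ℤ) :=
  (Finset.univ.filter (fun i => M ∣ n i), fun i => n i / M)

private lemma Qmono {d : ℕ} {E : Finset (Fin d)} {Q : Fin d → ℤ}
    (hadj : ∀ i j : Fin d, (i:ℕ)+1 = (j:ℕ) → (j ∈ E → Q i < Q j) ∧ (j ∉ E → Q i ≤ Q j)) :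
    ∀ i j : Fin d, i ≤ j → Q i ≤ Q j := by
  have key : ∀ k : ℕ, ∀ i j : Fin d, (i:ℕ) + k = (j:ℕ) → Q i ≤ Q j := by
    intro k
    induction k with
    | zero =>
      intro i j h
      have : i = j := Fin.ext (by omega)
      subst this; exact le_refl _
    | succ k ih =>
      intro i j h
      have hjd := j.isLt
      have hk : (i:ℕ) + k < d := by omega
      have h1 : Q i ≤ Q ⟨(i:ℕ)+k, hk⟩ := ih i ⟨(i:ℕ)+k, hk⟩ rfl
      have h2 : Q ⟨(i:ℕ)+k, hk⟩ ≤ Q j := by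
        rcases hadj ⟨(i:ℕ)+k, hk⟩ j (by simp; omega) with ⟨ha, hb⟩
        by_cases hj : j ∈ E
        · exact le_of_lt (ha hj)
        · exact hb hj
      exact h1.trans h2
  intro i j hij
  exact key ((j:ℕ) - (i:ℕ)) i j (by have := Fin.le_def.mp hij; omega)

private lemma Qstrict {d : ℕ} {E : Finset (Fin d)} {Q : Fin d → ℤ}
    (hadj : ∀ i j : Fin d, (i:ℕ)+1 = (j:ℕ) → (j ∈ E → Q i < Q j) ∧ (j ∉ E → Q i ≤ Q j)) :
    ∀ i j : Fin d, i < j → j ∈ E → Q i < Q j := by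
  intro i j hij hjE
  have hlt : (i:ℕ) < (j:ℕ) := Fin.lt_def.mp hij
  have hjd := j.isLt
  have h2 : Q i ≤ Q ⟨(j:ℕ)-1, by omega⟩ :=
    Qmono hadj i ⟨(j:ℕ)-1, by omega⟩ (by rw [Fin.le_def]; simp; omega)
  have h3 : Q ⟨(j:ℕ)-1, by omega⟩ < Q j := (hadj ⟨(j:ℕ)-1, by omega⟩ j (by simp; omega)).1 hjE
  exact lt_of_le_of_lt h2 h3

private lemma mem_fiber_iff {d : ℕ} {N M : ℤ} (hM : 0 < M) {E : Finset (Fin d)} {Q : Fin d → ℤ}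
    (hQ0 : ∀ i, 0 ≤ Q i) (hQN : ∀ i, Q i < N) (hE1 : ∀ i ∈ E, 1 ≤ Q i)
    (hadj : ∀ i j : Fin d, (i:ℕ)+1 = (j:ℕ) → (j ∈ E → Q i < Q j) ∧ (j ∉ E → Q i ≤ Q j))
    {n : Fin d → ℤ} :
    (n ∈ Adom d N M ∧ Fmap d M n = (E, Q)) ↔
      ((∀ i ∈ E, n i = Q i * M) ∧ (∀ i ∉ E, Q i * M < n i ∧ n i < (Q i + 1) * M) ∧
        (∀ i ∉ E, ∀ j ∉ E, Q i = Q j → i < j → n i < n j)) := by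
  constructor
  · rintro ⟨hA, hF⟩
    simp only [Fmap, Prod.mk.injEq] at hF
    obtain ⟨hFE, hFQ⟩ := hF
    have hdvd : ∀ i : Fin d, i ∈ E ↔ M ∣ n i := by
      intro i; rw [← hFE]; simp
    have hdiv : ∀ i, n i / M = Q i := fun i => congrFun hFQ i
    rw [Adom, Finset.mem_filter, Fintype.mem_piFinset] at hA
    obtain ⟨hbd, hmono⟩ := hA
    refine ⟨?_, ?_, ?_⟩
    · intro i hi
      have hd : M ∣ n i := (hdvd i).1 hi
      rw [← hdiv i]; exact (Int.ediv_mul_cancel hd).symm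
    · intro i hi
      have hnd : ¬ M ∣ n i := fun h => hi ((hdvd i).2 h)
      have h1 : Q i * M ≤ n i := by rw [← hdiv i]; exact Int.ediv_mul_le _ hM.ne'
      have h2 : Q i * M ≠ n i := by
        intro h; exact hnd ⟨Q i, by rw [← h]; ring⟩
      have h3 : n i < (Q i + 1) * M := by
        rw [← hdiv i]; exact Int.lt_ediv_add_one_mul_self _ hM
      exact ⟨lt_of_le_of_ne h1 h2, h3⟩
    · intro i _ j _ _ hij; exact hmono i j hij
  · rintro ⟨hEeq, hB, hmonF⟩
    have hQm := Qmono hadj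
    have hQs := Qstrict hadj
    have hlow : ∀ i, Q i * M ≤ n i := by
      intro i; by_cases hi : i ∈ E
      · rw [hEeq i hi]
      · exact (hB i hi).1.le
    have hup : ∀ i, n i < (Q i + 1) * M := by
      intro i; by_cases hi : i ∈ E
      · rw [hEeq i hi]; nlinarith
      · exact (hB i hi).2
    have hmono : ∀ i j : Fin d, i < j → n i < n j := by
      intro i j hij
      rcases lt_trichotomy (Q i) (Q j) with h | h | h
      · have h1 : (Q i + 1) * M ≤ Q j * M :=
          mul_le_mul_of_nonneg_right (by omega) hM.le
        exact lt_of_lt_of_le (hup i) (le_trans h1 (hlow j))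
      · by_cases hjE : j ∈ E
        · exact absurd (hQs i j hij hjE) (by omega)
        · by_cases hiE : i ∈ E
          · rw [hEeq i hiE, h]; exact (hB j hjE).1
          · exact hmonF i hiE j hjE h hij
      · exact absurd (hQm i j hij.le) (by omega)
    have hpos : ∀ i, 0 < n i := by
      intro i; by_cases hi : i ∈ E
      · rw [hEeq i hi]; have := hE1 i hi; nlinarith
      · have := (hB i hi).1; have := hQ0 i; nlinarith
    have hub : ∀ i, n i < N * M := by
      intro i
      have h1 := hup i
      have h2 : Q i + 1 ≤ N := by have := hQN i; omega
      nlinarith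
    constructor
    · rw [Adom, Finset.mem_filter, Fintype.mem_piFinset]
      exact ⟨fun i => Finset.mem_Ioo.2 ⟨hpos i, hub i⟩, hmono⟩
    · simp only [Fmap, Prod.mk.injEq]
      constructor
      · ext i
        simp only [Finset.mem_filter, Finset.mem_univ, true_and]
        constructor
        · intro hdv
          by_contra hiE
          obtain ⟨c, hc⟩ := hdv
          obtain ⟨hl, hu⟩ := hB i hiE
          rw [hc] at hl hu
          have hc1 : Q i < c := by nlinarith
          have hc2 : c < Q i + 1 := by nlinarith
          omega
        · intro hi; exact ⟨Q i, by rw [hEeq i hi]; ring⟩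
      · funext i
        show n i / M = Q i
        have h1 : Q i ≤ n i / M := (Int.le_ediv_iff_mul_le hM).2 (hlow i)
        have h2 : n i / M < Q i + 1 := (Int.ediv_lt_iff_lt_mul hM).2 (hup i)
        omega

private lemma step2 {R : Type*} [CommRing R] {d : ℕ} {N M : ℤ} (hM : 0 < M)
    (χ : Fin d → ℤ → R) {E : Finset (Fin d)} {Q : Fin d → ℤ}
    (hQ0 : ∀ i, 0 ≤ Q i) (hQN : ∀ i, Q i < N) (hE1 : ∀ i ∈ E, 1 ≤ Q i)
    (hadj : ∀ i j : Fin d, (i:ℕ)+1 = (j:ℕ) → (j ∈ E → Q i < Q j) ∧ (j ∉ E → Q i ≤ Q j)) :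
    (∏ i ∈ E, χ i (Q i * M)) *
      ∏ q ∈ (Finset.univ \ E).image Q,
        chainSumOn χ ((Finset.univ \ E).filter (fun i => Q i = q)) (q * M) ((q + 1) * M)
    = ∑ n ∈ (Adom d N M).filter (fun n => Fmap d M n = (E, Q)), ∏ i, χ i (n i) := by
  classical
  set im := (Finset.univ \ E).image Q with him
  set fib : ℤ → Finset (Fin d) := fun q => (Finset.univ \ E).filter (fun i => Q i = q) with hfib
  set D : ℤ → Finset (Fin d → ℤ) := fun q =>
    (Fintype.piFinset fun i : Fin d =>
        if i ∈ fib q then Finset.Ioo (q*M) ((q+1)*M) else {0}).filter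
      (fun m => ∀ i ∈ fib q, ∀ j ∈ fib q, i < j → m i < m j) with hD
  have hmemim : ∀ i : Fin d, i ∉ E → Q i ∈ im := fun i hi =>
    Finset.mem_image_of_mem Q (Finset.mem_sdiff.2 ⟨Finset.mem_univ i, hi⟩)
  have hfibmem : ∀ i : Fin d, i ∉ E → i ∈ fib (Q i) := fun i hi =>
    Finset.mem_filter.2 ⟨Finset.mem_sdiff.2 ⟨Finset.mem_univ i, hi⟩, rfl⟩
  set toFun : (∀ q ∈ im, Fin d → ℤ) → (Fin d → ℤ) := fun p i =>
    if h : i ∈ E then Q i * M else p (Q i) (hmemim i h) i with htoFun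
  set inv : (Fin d → ℤ) → (∀ q ∈ im, Fin d → ℤ) := fun n q _ i =>
    if i ∈ fib q then n i else 0 with hinv
  have hcoord : ∀ p ∈ im.pi D, ∀ (q : ℤ) (hq : q ∈ im) (i : Fin d),
      p q hq i = if i ∈ fib q then toFun p i else 0 := by
    intro p hp q hq i
    have hpq := Finset.mem_pi.1 hp q hq
    rw [hD, Finset.mem_filter] at hpq
    have hpi := Fintype.mem_piFinset.1 hpq.1 i
    by_cases hi : i ∈ fib q
    · rw [if_pos hi]
      have hiE : i ∉ E := (Finset.mem_sdiff.1 (Finset.mem_filter.1 hi).1).2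
      have hQi : Q i = q := (Finset.mem_filter.1 hi).2
      rw [htoFun]
      simp only [dif_neg hiE]
      subst hQi; rfl
    · rw [if_neg hi]
      rw [if_neg hi] at hpi
      simpa using hpi
  have expand : (∏ q ∈ im,
      chainSumOn χ ((Finset.univ \ E).filter (fun i => Q i = q)) (q * M) ((q + 1) * M))
      = ∑ p ∈ im.pi D, ∏ x ∈ im.attach, ∏ i ∈ fib x.1, χ i (p x.1 x.2 i) := by
    rw [show (∏ q ∈ im,
        chainSumOn χ ((Finset.univ \ E).filter (fun i => Q i = q)) (q * M) ((q + 1) * M))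
        = ∏ q ∈ im, ∑ m ∈ D q, ∏ i ∈ fib q, χ i (m i) from
      Finset.prod_congr rfl fun q _ => rfl]
    exact Finset.prod_sum im D (fun q m => ∏ i ∈ fib q, χ i (m i))
  rw [expand, Finset.mul_sum]
  refine Finset.sum_nbij' toFun inv ?_ ?_ ?_ ?_ ?_
  · -- maps to
    intro p hp
    rw [Finset.mem_filter]
    have key : ∀ i : Fin d, i ∉ E → toFun p i ∈ Finset.Ioo (Q i * M) ((Q i + 1) * M) := by
      intro i hi
      have h1 := hcoord p hp (Q i) (hmemim i hi) i
      rw [if_pos (hfibmem i hi)] at h1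
      have hpq := Finset.mem_pi.1 hp (Q i) (hmemim i hi)
      rw [hD, Finset.mem_filter] at hpq
      have hpi := Fintype.mem_piFinset.1 hpq.1 i
      rw [if_pos (hfibmem i hi)] at hpi
      rw [← h1]; exact hpi
    have hmonofib : ∀ i ∉ E, ∀ j ∉ E, Q i = Q j → i < j → toFun p i < toFun p j := by
      intro i hi j hj hQij hij
      have hpq := Finset.mem_pi.1 hp (Q i) (hmemim i hi)
      rw [hD, Finset.mem_filter] at hpq
      have hj' : j ∈ fib (Q i) := by rw [hQij]; exact hfibmem j hj
      have := hpq.2 i (hfibmem i hi) j hj' hij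
      have h1 := hcoord p hp (Q i) (hmemim i hi) i
      rw [if_pos (hfibmem i hi)] at h1
      have h2 := hcoord p hp (Q i) (hmemim i hi) j
      rw [if_pos hj'] at h2
      rw [← h1, ← h2]; exact this
    exact (mem_fiber_iff hM hQ0 hQN hE1 hadj).2
      ⟨fun i hi => by rw [htoFun]; simp [dif_pos hi],
       fun i hi => by
         have := key i hi; rw [Finset.mem_Ioo] at this; exact this,
       hmonofib⟩
  · -- inv maps to
    intro n hn
    rw [Finset.mem_filter] at hn
    have hch := (mem_fiber_iff hM hQ0 hQN hE1 hadj).1 ⟨hn.1, hn.2⟩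
    obtain ⟨hEeq, hB, hmonF⟩ := hch
    rw [Finset.mem_pi]
    intro q hq
    rw [hD, Finset.mem_filter]
    constructor
    · rw [Fintype.mem_piFinset]
      intro i
      by_cases hi : i ∈ fib q
      · rw [if_pos hi, hinv]
        simp only [if_pos hi]
        have hiE : i ∉ E := (Finset.mem_sdiff.1 (Finset.mem_filter.1 hi).1).2
        have hQi : Q i = q := (Finset.mem_filter.1 hi).2
        have := hB i hiE
        rw [hQi] at this
        exact Finset.mem_Ioo.2 this
      · rw [if_neg hi, hinv]
        simp [if_neg hi]
    · intro i hi j hj hij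
      rw [hinv]
      simp only [if_pos hi, if_pos hj]
      have hiE : i ∉ E := (Finset.mem_sdiff.1 (Finset.mem_filter.1 hi).1).2
      have hjE : j ∉ E := (Finset.mem_sdiff.1 (Finset.mem_filter.1 hj).1).2
      exact hmonF i hiE j hjE (by
        rw [(Finset.mem_filter.1 hi).2, (Finset.mem_filter.1 hj).2]) hij
  · -- left inverse
    intro p hp
    funext q hq i
    rw [hinv]
    exact (hcoord p hp q hq i).symm
  · -- right inverse
    intro n hn
    rw [Finset.mem_filter] at hn
    have hch := (mem_fiber_iff hM hQ0 hQN hE1 hadj).1 ⟨hn.1, hn.2⟩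
    obtain ⟨hEeq, hB, hmonF⟩ := hch
    funext i
    rw [htoFun]
    by_cases hi : i ∈ E
    · simp only [dif_pos hi]
      exact (hEeq i hi).symm
    · simp only [dif_neg hi, hinv, if_pos (hfibmem i hi)]
  · -- values
    intro p hp
    have h1 : ∀ x ∈ im.attach, (∏ i ∈ fib x.1, χ i (p x.1 x.2 i))
        = ∏ i ∈ fib x.1, χ i (toFun p i) := by
      intro x _
      refine Finset.prod_congr rfl fun i hi => ?_
      rw [hcoord p hp x.1 x.2 i, if_pos hi]
    rw [Finset.prod_congr rfl h1, Finset.prod_attach im (fun q => ∏ i ∈ fib q, χ i (toFun p i))]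
    have h2 : ∏ q ∈ im, ∏ i ∈ fib q, χ i (toFun p i)
        = ∏ i ∈ Finset.univ \ E, χ i (toFun p i) :=
      Finset.prod_fiberwise_of_maps_to
        (fun i hi => hmemim i (Finset.mem_sdiff.1 hi).2) _
    have h3 : (∏ i ∈ E, χ i (Q i * M)) = ∏ i ∈ E, χ i (toFun p i) := by
      refine Finset.prod_congr rfl fun i hi => ?_
      rw [htoFun]; simp [dif_pos hi]
    rw [h2, h3, mul_comm, Finset.prod_sdiff (Finset.subset_univ E)]

private lemma step3 {d : ℕ} {N M : ℤ} (hM : 0 < M) {n : Fin d → ℤ}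
    (hn : n ∈ Adom d N M) :
    (∀ i, (Fmap d M n).2 i ∈ Finset.Ico (0:ℤ) N) ∧
    (∀ i ∈ (Fmap d M n).1, 1 ≤ (Fmap d M n).2 i) ∧
    (∀ i j : Fin d, (i:ℕ)+1 = (j:ℕ) →
      (j ∈ (Fmap d M n).1 → (Fmap d M n).2 i < (Fmap d M n).2 j) ∧
      (j ∉ (Fmap d M n).1 → (Fmap d M n).2 i ≤ (Fmap d M n).2 j)) := by
  rw [Adom, Finset.mem_filter, Fintype.mem_piFinset] at hn
  obtain ⟨hbd, hmono⟩ := hn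
  have hpos : ∀ i, 0 < n i := fun i => (Finset.mem_Ioo.1 (hbd i)).1
  have hub : ∀ i, n i < N * M := fun i => (Finset.mem_Ioo.1 (hbd i)).2
  simp only [Fmap, Finset.mem_filter, Finset.mem_univ, true_and]
  refine ⟨?_, ?_, ?_⟩
  · intro i
    exact Finset.mem_Ico.2 ⟨Int.ediv_nonneg (hpos i).le hM.le,
      (Int.ediv_lt_iff_lt_mul hM).2 (hub i)⟩
  · intro i hdvd
    have h1 : M ≤ n i := Int.le_of_dvd (hpos i) hdvd
    exact (Int.le_ediv_iff_mul_le hM).2 (by linarith)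
  · intro i j hij
    have hlt : i < j := Fin.lt_def.2 (by omega)
    have hnij : n i < n j := hmono i j hlt
    constructor
    · intro hdvd
      have h1 : n j / M * M = n j := Int.ediv_mul_cancel hdvd
      have h2 : n i / M * M ≤ n i := Int.ediv_mul_le _ hM.ne'
      have h3 : n i / M * M < n j / M * M := by omega
      exact lt_of_mul_lt_mul_right h3 hM.le
    · intro _
      exact Int.ediv_le_ediv hM hnij.le



/-- Multiplication of upper bounds.  The sum `∑_{0<n_1<⋯<n_d<NM} χ_1(n_1)⋯χ_d(n_d)` is
decomposed by grouping the indices according to whether `M ∣ n_i` (those `i` form the set `E`,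
with `n_i = Q_i·M`) and, for the remaining indices, according to the value `Q_i = ⌊n_i/M⌋`.
The data of the subset `E`, of the block data (ordered partitions of the gaps of `E` into
nonempty blocks of consecutive indices), of the chain `0 = m_0 < m_1 < ⋯ < m_{d'} < N` and of
the values `m_t ≤ q_{t,1} < ⋯ < q_{t,j_t} ≤ m_{t+1}−1` is encoded by the pair `(E, Q)` where
`Q : Fin d → {0,…,N−1}` records `m_t` at the `t`-th element of `E` and `q_{t,x}` on the block
`P_t^x`; the constraints are: `1 ≤ Q_i` for `i ∈ E`, and for adjacent indices `i, j = i+1`,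
`Q_i < Q_j` when `j ∈ E` and `Q_i ≤ Q_j` when `j ∉ E`.  The blocks `P_t^x` are then exactly the
fibers of `Q` on the complement of `E` (all carrying pairwise distinct values `q`), and each
block contributes the chain sum `∑_{qM<n_{u}<(q+1)M, increasing} ∏_{u} χ_u(n_u)`. -/
theorem mhs_multiplication {R : Type*} [CommRing R] (N M : ℤ) (hN : 1 ≤ N) (hM : 1 ≤ M)
    (d : ℕ) (hd : 1 ≤ d) (χ : Fin d → ℤ → R) :
    chainSumOn χ Finset.univ 0 (N * M)
      = ∑ E : Finset (Fin d),
          ∑ Q ∈ (Fintype.piFinset fun _ : Fin d => Finset.Ico (0 : ℤ) N).filter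
              (fun Q => (∀ i ∈ E, 1 ≤ Q i) ∧
                ∀ i j : Fin d, (i : ℕ) + 1 = (j : ℕ) →
                  (j ∈ E → Q i < Q j) ∧ (j ∉ E → Q i ≤ Q j)),
            (∏ i ∈ E, χ i (Q i * M)) *
              ∏ q ∈ (Finset.univ \ E).image Q,
                chainSumOn χ ((Finset.univ \ E).filter (fun i => Q i = q))
                  (q * M) ((q + 1) * M) := by
  classical
  have hM0 : (0:ℤ) < M := by linarith
  have hL : chainSumOn χ Finset.univ 0 (N * M) = ∑ n ∈ Adom d N M, ∏ i, χ i (n i) := by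
    rw [chainSumOn]
    apply Finset.sum_congr _ (fun _ _ => rfl)
    congr 1
    · funext n; simp
    · ext i; simp
  set P := Fintype.piFinset fun _ : Fin d => Finset.Ico (0 : ℤ) N with hP
  set c : Finset (Fin d) → (Fin d → ℤ) → Prop := fun E Q =>
    (∀ i ∈ E, 1 ≤ Q i) ∧
      ∀ i j : Fin d, (i : ℕ) + 1 = (j : ℕ) →
        (j ∈ E → Q i < Q j) ∧ (j ∉ E → Q i ≤ Q j) with hc
  set g : (Fin d → ℤ) → Σ _ : Finset (Fin d), (Fin d → ℤ) := fun n =>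
    ⟨(Fmap d M n).1, (Fmap d M n).2⟩ with hg
  have h4 : ∀ n ∈ Adom d N M,
      g n ∈ (Finset.univ : Finset (Finset (Fin d))).sigma (fun E => P.filter (c E)) := by
    intro n hn
    obtain ⟨ha, hb, hcc⟩ := step3 hM0 hn
    rw [Finset.mem_sigma]
    exact ⟨Finset.mem_univ _, Finset.mem_filter.2 ⟨Fintype.mem_piFinset.2 ha, hb, hcc⟩⟩
  rw [hL, ← Finset.sum_sigma (Finset.univ : Finset (Finset (Fin d)))
      (fun E => P.filter (c E))
      (fun p => (∏ i ∈ p.1, χ i (p.2 i * M)) *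
        ∏ q ∈ (Finset.univ \ p.1).image p.2,
          chainSumOn χ ((Finset.univ \ p.1).filter (fun i => p.2 i = q))
            (q * M) ((q + 1) * M)),
    ← Finset.sum_fiberwise_of_maps_to h4 (fun n => ∏ i, χ i (n i))]
  refine Finset.sum_congr rfl fun p hp => ?_
  obtain ⟨E, Q⟩ := p
  rw [Finset.mem_sigma] at hp
  have hp2 := Finset.mem_filter.1 hp.2
  have h0 : ∀ i, 0 ≤ Q i := fun i => (Finset.mem_Ico.1 (Fintype.mem_piFinset.1 hp2.1 i)).1
  have h1 : ∀ i, Q i < N := fun i => (Finset.mem_Ico.1 (Fintype.mem_piFinset.1 hp2.1 i)).2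
  have hfe : (Adom d N M).filter (fun n => g n = ⟨E, Q⟩)
      = (Adom d N M).filter (fun n => Fmap d M n = (E, Q)) := by
    apply Finset.filter_congr
    intro n _
    simp only [hg, Sigma.ext_iff, Prod.ext_iff, heq_eq_eq]
  rw [hfe, ← step2 hM0 χ h0 h1 hp2.2.1 hp2.2.2]
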